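/- The Gauss curvature of the Riemannian metric g = diag(2/(1+exp(-2s_2)), 2/(1-exp(-2s_2))) on the half-plane s_2 > 0 equals (exp(2s_2) - 2)/(exp(2s_2) + 1)². -/

import Mathlib

/-- The Gauss curvature of the diagonal metric `g = diag (E, G)` depending only on the
second coordinate `s₂`, with `E s₂ = 2/(1+exp(-2 s₂))` and `G s₂ = 2/(1-exp(-2 s₂))`,
computed by the standard formula `K = -(1/(2 √(E G))) * d/ds₂ (E' / √(E G))`
(valid since the metric does not depend on `s₁`),
equals `(exp (2 s₂) - 2)/(exp (2 s₂) + 1)^2` on the half-plane `s₂ > 0`. -/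
theorem twopeakon_gauss_curvature (s₂ : ℝ) (hs : s₂ > 0) (E G : ℝ → ℝ)
    (hE : E = fun v => 2 / (1 + Real.exp (-2 * v)))
    (hG : G = fun v => 2 / (1 - Real.exp (-2 * v))) :
    -(1 / (2 * Real.sqrt (E s₂ * G s₂))) *
        deriv (fun v => deriv E v / Real.sqrt (E v * G v)) s₂
      = (Real.exp (2 * s₂) - 2) / (Real.exp (2 * s₂) + 1)^2 := by
  subst hE hG
  have h2 : ∀ v : ℝ, HasDerivAt (fun v => Real.exp (-2*v)) (-2 * Real.exp (-2*v)) v := by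
    intro v
    have := (Real.hasDerivAt_exp (-2*v)).comp v ((hasDerivAt_id v).const_mul (-2))
    simpa [Function.comp_def, mul_comm] using this
  have hEd : ∀ v : ℝ, HasDerivAt (fun v => 2 / (1 + Real.exp (-2*v)))
      ((0 * (1 + Real.exp (-2*v)) - 2 * (-2 * Real.exp (-2*v))) / (1 + Real.exp (-2*v))^2) v := by
    intro v
    exact (hasDerivAt_const v 2).div ((h2 v).const_add 1) (by positivity)
  have hderivE : deriv (fun v => 2 / (1 + Real.exp (-2*v)))
      = fun v => 4 * Real.exp (-2*v) / (1 + Real.exp (-2*v))^2 := by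
    funext v
    rw [(hEd v).deriv]
    ring
  -- key sqrt identity for v > 0
  have key : ∀ v : ℝ, 0 < v →
      Real.sqrt ((2 / (1 + Real.exp (-2*v))) * (2 / (1 - Real.exp (-2*v))))
        = 2 / Real.sqrt (1 - Real.exp (-2*v)^2) := by
    intro v hv
    have hu1 : Real.exp (-2*v) < 1 := Real.exp_lt_one_iff.mpr (by linarith)
    have hu0 : 0 < Real.exp (-2*v) := Real.exp_pos _
    have hw : 0 < Real.sqrt (1 - Real.exp (-2*v)^2) := Real.sqrt_pos.mpr (by nlinarith)
    rw [show (2 / (1 + Real.exp (-2*v))) * (2 / (1 - Real.exp (-2*v)))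
        = (2 / Real.sqrt (1 - Real.exp (-2*v)^2))^2 by
      rw [div_pow, Real.sq_sqrt (by nlinarith)]
      have h3 : (1 - Real.exp (-2*v)) ≠ 0 := ne_of_gt (by linarith)
      have h4 : (1 - Real.exp (-2*v)^2) ≠ 0 := ne_of_gt (by nlinarith)
      rw [div_mul_div_comm, div_eq_div_iff (mul_ne_zero (by positivity) h3) h4]
      ring]
    exact Real.sqrt_sq (by positivity)
  -- the simplified function g
  set g : ℝ → ℝ := fun v =>
    2 * Real.exp (-2*v) * Real.sqrt (1 - Real.exp (-2*v)^2) / (1 + Real.exp (-2*v))^2 with hg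
  have heq : (fun v => deriv (fun v => 2 / (1 + Real.exp (-2*v))) v /
      Real.sqrt ((2 / (1 + Real.exp (-2*v))) * (2 / (1 - Real.exp (-2*v))))) =ᶠ[nhds s₂] g := by
    filter_upwards [eventually_gt_nhds hs] with v hv
    have hu1 : Real.exp (-2*v) < 1 := Real.exp_lt_one_iff.mpr (by linarith)
    have hu0 : 0 < Real.exp (-2*v) := Real.exp_pos _
    have hw : 0 < Real.sqrt (1 - Real.exp (-2*v)^2) := Real.sqrt_pos.mpr (by nlinarith)
    rw [hderivE, key v hv, hg]
    field_simp
    ring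
  -- derivative of g at s₂
  set u := Real.exp (-2*s₂) with hu
  have hu1 : u < 1 := Real.exp_lt_one_iff.mpr (by linarith)
  have hu0 : 0 < u := Real.exp_pos _
  have hwpos : 0 < Real.sqrt (1 - u^2) := Real.sqrt_pos.mpr (by nlinarith)
  set w := Real.sqrt (1 - u^2) with hwdef
  have hw2 : w^2 = 1 - u^2 := Real.sq_sqrt (by nlinarith)
  have hb : HasDerivAt (fun v => 1 - Real.exp (-2*v)^2)
      (0 - (2 * u^(2-1) * (-2 * u))) s₂ := (hasDerivAt_const s₂ 1).sub ((h2 s₂).pow 2)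
  have hsq : HasDerivAt (fun v => Real.sqrt (1 - Real.exp (-2*v)^2))
      ((0 - (2 * u^(2-1) * (-2 * u))) / (2 * w)) s₂ := hb.sqrt (by nlinarith)
  have hnum : HasDerivAt (fun v => 2 * Real.exp (-2*v) * Real.sqrt (1 - Real.exp (-2*v)^2))
      ((2 * (-2 * u)) * w + (2 * u) * ((0 - (2 * u^(2-1) * (-2 * u))) / (2 * w))) s₂ :=
    ((h2 s₂).const_mul 2).mul hsq
  have hden : HasDerivAt (fun v => (1 + Real.exp (-2*v))^2)
      (2 * (1 + u)^(2-1) * (-2 * u)) s₂ := ((h2 s₂).const_add 1).pow 2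
  have hgd : HasDerivAt g
      ((((2 * (-2 * u)) * w + (2 * u) * ((0 - (2 * u^(2-1) * (-2 * u))) / (2 * w))) * (1 + u)^2
        - (2 * u * w) * (2 * (1 + u)^(2-1) * (-2 * u))) / ((1 + u)^2)^2) s₂ :=
    hnum.div hden (by positivity)
  rw [heq.deriv_eq, hgd.deriv, key s₂ hs]
  have he2 : Real.exp (2 * s₂) = u⁻¹ := by
    rw [hu, ← Real.exp_neg]; ring_nf
  rw [he2]
  have h1u : (1:ℝ) + u ≠ 0 := by positivity
  field_simp
  rw [show (-(2*s₂)) = -2*s₂ by ring, ← hwdef]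
  linear_combination (8*u^2*w*(1+u)^3*(1-u) + w*(4 - 12*u^2 - 16*u^3 + 16*u^5 + 8*u^6)) * hw2
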